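/- arXiv:1609.05565 — 3 statements merged into one kernel-verified Lean document; each statement's English description precedes it below -/
import Mathlib

section
/- Let n ≥ 4. In the root system of type D_n, the minimum, over simple roots α_k ∈ Π (1 ≤ k ≤ n), of the resonant codimension of Π ∖ {α_k} equals 2n − 2. -/
namespace Stmt10

noncomputable def L {n : ℕ} (w : Fin n → ℝ) : (Fin n → ℝ) →ₗ[ℝ] ℝ :=
  ∑ i, w i • LinearMap.proj i

lemma L_apply {n : ℕ} (w v : Fin n → ℝ) : L w v = ∑ i, w i * v i := by
  simp [L]

lemma L_single {n : ℕ} (w : Fin n → ℝ) (j : Fin n) : L w (Pi.single j 1) = w j := by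
  simp [L_apply, Pi.single_apply, mul_ite]

lemma root_inj {n : ℕ} {i j i' j' : Fin n} (hij : i < j) (hij' : i' < j')
    {s s' : ℝ} (hs : s = 1 ∨ s = -1) (hs' : s' = 1 ∨ s' = -1)
    (h : (Pi.single i 1 : Fin n → ℝ) + s • (Pi.single j 1 : Fin n → ℝ)
        = (Pi.single i' 1 : Fin n → ℝ) + s' • (Pi.single j' 1 : Fin n → ℝ)) :
    i = i' ∧ j = j' ∧ s = s' := by
  have H : ∀ x, (if x = i then (1:ℝ) else 0) + (if x = j then s else 0)
      = (if x = i' then 1 else 0) + (if x = j' then s' else 0) := by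
    intro x
    have := congrFun h x
    simpa [Pi.single_apply] using this
  have hji : i ≠ j := hij.ne
  have hj'i' : i' ≠ j' := hij'.ne
  have hii : i = i' := by
    by_contra hii'
    have H1 := H i
    have H2 := H i'
    rw [if_pos rfl, if_neg hji, if_neg (fun hh : i = i' => hii' hh)] at H1
    rw [if_neg (fun hh : i' = i => hii' hh.symm), if_pos rfl, if_neg hj'i'] at H2
    by_cases hj'i : i = j'
    · rw [if_pos hj'i] at H1
      by_cases hji' : i' = j
      · exact absurd ((hj'i ▸ hij).trans (hji' ▸ hij')) (lt_irrefl _)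
      · rw [if_neg hji'] at H2
        rcases hs with rfl | rfl <;> linarith
    · rw [if_neg hj'i] at H1
      rcases hs' with rfl | rfl <;> linarith
  subst hii
  have H3 := H j
  rw [if_neg (fun hh : j = i => hji hh.symm), if_pos rfl] at H3
  by_cases hj'j : j = j'
  · subst hj'j
    rw [if_pos rfl] at H3
    exact ⟨rfl, rfl, by linarith⟩
  · rw [if_neg hj'j] at H3
    rcases hs with rfl | rfl <;> rcases hs' with rfl | rfl <;> simp_all

/-- difference written in the `+ smul` normal form -/
lemma sub_form {n : ℕ} (i j : Fin n) :
    (Pi.single i 1 : Fin n → ℝ) - Pi.single j 1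
      = (Pi.single i 1 : Fin n → ℝ) + (-1 : ℝ) • (Pi.single j 1 : Fin n → ℝ) := by
  rw [neg_one_smul, sub_eq_add_neg]

lemma sum_form {n : ℕ} (i j : Fin n) :
    (Pi.single i 1 : Fin n → ℝ) + Pi.single j 1
      = (Pi.single i 1 : Fin n → ℝ) + (1 : ℝ) • (Pi.single j 1 : Fin n → ℝ) := by
  rw [one_smul]

end Stmt10

open Stmt10 in
/-- In the root system of type `D_n` (`n ≥ 4`), the minimum over simple roots `α_k` of the
resonant codimension of `Π \ {α_k}` equals `2n - 2`. -/
theorem stmt10 (n : ℕ) (hn : 4 ≤ n) :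
    let e : Fin n → (Fin n → ℝ) := fun i => Pi.single i 1
    let Sp : Set (Fin n → ℝ) :=
      {v | ∃ i j : Fin n, i < j ∧ (v = e i - e j ∨ v = e i + e j)}
    let α : Fin n → (Fin n → ℝ) := fun k =>
      if h : (k : ℕ) + 1 < n then e k - e ⟨(k : ℕ) + 1, h⟩
      else e ⟨n - 2, by omega⟩ + e ⟨n - 1, by omega⟩
    let rc : Set (Fin n → ℝ) → ℕ := fun Pi' =>
      Set.ncard {v | v ∈ Sp ∧ v ∉ Submodule.span ℝ Pi'}
    (⨅ k : Fin n, rc (Set.range α \ {α k})) = 2 * n - 2 := by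
  intro e Sp α rc
  -- finiteness of the set of positive roots
  have hSpfin : Sp.Finite := by
    have hsub : Sp ⊆ (fun p : Fin n × Fin n × Bool =>
        if p.2.2 then e p.1 + e p.2.1 else e p.1 - e p.2.1) '' Set.univ := by
      rintro v ⟨i, j, hij, h | h⟩
      · exact ⟨(i, j, false), trivial, by simp [h]⟩
      · exact ⟨(i, j, true), trivial, by simp [h]⟩
    exact Set.Finite.subset (Set.finite_univ.image _) hsub
  -- injectivity of α
  have hαinj : Function.Injective α := by
    intro a b hab
    simp only [α] at hab
    by_cases ha : (a : ℕ) + 1 < n <;> by_cases hb : (b : ℕ) + 1 < n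
    · rw [dif_pos ha, dif_pos hb, sub_form, sub_form] at hab
      have := root_inj (by simp [Fin.lt_def]) (by simp [Fin.lt_def])
        (Or.inr rfl) (Or.inr rfl) hab
      exact this.1
    · rw [dif_pos ha, dif_neg hb, sub_form, sum_form] at hab
      have := root_inj (i := a) (by simp [Fin.lt_def]) (by simp [Fin.lt_def]; omega)
        (Or.inr rfl) (Or.inl rfl) hab
      norm_num at this
    · rw [dif_neg ha, dif_pos hb, sum_form, sub_form] at hab
      have := root_inj (by simp [Fin.lt_def]; omega) (by simp [Fin.lt_def])
        (Or.inl rfl) (Or.inr rfl) hab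
      norm_num at this
    · have h1 : (a : ℕ) = n - 1 := by have := a.isLt; omega
      have h2 : (b : ℕ) = n - 1 := by have := b.isLt; omega
      exact Fin.ext (h1.trans h2.symm)
  -- generic lower bound lemma
  have lb : ∀ (k : Fin n) (w : Fin n → ℝ) (ψ : Fin (n-1) × Bool → Fin n → ℝ),
      (∀ v ∈ Set.range α \ {α k}, L w v = 0) →
      Function.Injective ψ → (∀ x, ψ x ∈ Sp) → (∀ x, L w (ψ x) ≠ 0) →
      2 * n - 2 ≤ rc (Set.range α \ {α k}) := by
    intro k w ψ hw hinj hmem hval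
    have hspan : Submodule.span ℝ (Set.range α \ {α k}) ≤ LinearMap.ker (L w) :=
      Submodule.span_le.2 (fun v hv => hw v hv)
    have hsub : Set.range ψ ⊆
        {v | v ∈ Sp ∧ v ∉ Submodule.span ℝ (Set.range α \ {α k})} := by
      rintro v ⟨x, rfl⟩
      exact ⟨hmem x, fun hmem' => hval x (hspan hmem')⟩
    have hfin : {v | v ∈ Sp ∧ v ∉ Submodule.span ℝ (Set.range α \ {α k})}.Finite :=
      hSpfin.subset (fun v hv => hv.1)
    have h1 : (Set.range ψ).ncard = 2 * n - 2 := by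
      rw [← Set.image_univ, Set.ncard_image_of_injective _ hinj, Set.ncard_univ]
      simp [Nat.card_eq_fintype_card]
      omega
    calc 2 * n - 2 = (Set.range ψ).ncard := h1.symm
      _ ≤ _ := Set.ncard_le_ncard hsub hfin
  -- membership of the generators in the span after removing α k
  have hαmem : ∀ (k t : Fin n), t ≠ k → α t ∈ Submodule.span ℝ (Set.range α \ {α k}) :=
    fun k t ht => Submodule.subset_span ⟨⟨t, rfl⟩, fun hc => ht (hαinj hc)⟩
  -- the span after removing α 0
  set z : Fin n := ⟨0, by omega⟩ with hz
  set W : Submodule ℝ (Fin n → ℝ) := Submodule.span ℝ (Set.range α \ {α z}) with hW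
  have hdiff : ∀ d : ℕ, ∀ a b : Fin n, 1 ≤ (a:ℕ) → (a:ℕ) ≤ (b:ℕ) → (b:ℕ) - (a:ℕ) = d →
      e a - e b ∈ W := by
    intro d
    induction d with
    | zero =>
      intro a b h1 h2 h3
      have : a = b := Fin.ext (by omega)
      rw [this, sub_self]
      exact W.zero_mem
    | succ d ih =>
      intro a b h1 h2 h3
      have hbn := b.isLt
      have hc : (b:ℕ) - 1 < n := by omega
      set c : Fin n := ⟨(b:ℕ) - 1, hc⟩ with hcdef
      have h4 : e a - e b = (e a - e c) + (e c - e b) := by abel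
      rw [h4]
      refine W.add_mem (ih a c h1 (by simp [hcdef]; omega) (by simp [hcdef]; omega)) ?_
      have hα : α c = e c - e b := by
        have hcn : (c:ℕ) + 1 < n := by
          show (b:ℕ) - 1 + 1 < n; omega
        simp only [α]
        rw [dif_pos hcn]
        have h6 : (⟨(c:ℕ) + 1, hcn⟩ : Fin n) = b :=
          Fin.ext (show (b:ℕ) - 1 + 1 = (b:ℕ) by omega)
        rw [h6]
      rw [← hα]
      exact hαmem z c (by simp [hcdef, hz, Fin.ext_iff]; omega)
  have hdiff' : ∀ a b : Fin n, 1 ≤ (a:ℕ) → 1 ≤ (b:ℕ) → e a - e b ∈ W := by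
    intro a b h1 h2
    rcases le_total (a:ℕ) (b:ℕ) with h | h
    · exact hdiff _ a b h1 h rfl
    · have := hdiff _ b a h2 h rfl
      have h3 : e a - e b = -(e b - e a) := by abel
      rw [h3]; exact W.neg_mem this
  have hsum : ∀ a b : Fin n, 1 ≤ (a:ℕ) → 1 ≤ (b:ℕ) → e a + e b ∈ W := by
    intro a b h1 h2
    set p : Fin n := ⟨n - 2, by omega⟩ with hp
    set q : Fin n := ⟨n - 1, by omega⟩ with hq
    have h4 : e a + e b = (e a - e p) + (e b - e q) + (e p + e q) := by abel
    rw [h4]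
    refine W.add_mem (W.add_mem (hdiff' a p h1 (by simp [hp]; omega))
      (hdiff' b q h2 (by simp [hq]; omega))) ?_
    have hα : α q = e p + e q := by
      simp only [α]
      rw [dif_neg (show ¬ ((q:ℕ) + 1 < n) by simp [hq]; omega)]
    rw [← hα]
    exact hαmem z q (by simp [hq, hz, Fin.ext_iff]; omega)
  -- upper bound at k = 0
  have hub : rc (Set.range α \ {α z}) ≤ 2 * n - 2 := by
    simp only [rc]
    set f : Fin (n-1) × Bool → Fin n → ℝ := fun x =>
      if x.2 then e z + e ⟨(x.1 : ℕ) + 1, by have := x.1.isLt; omega⟩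
      else e z - e ⟨(x.1 : ℕ) + 1, by have := x.1.isLt; omega⟩ with hf
    have hsub : {v | v ∈ Sp ∧ v ∉ W} ⊆ f '' Set.univ := by
      rintro v ⟨⟨i, j, hij, hv | hv⟩, hns⟩
      · by_cases hi : (i:ℕ) = 0
        · have hj1 : 1 ≤ (j:ℕ) := by
            have := hij
            rw [Fin.lt_def] at this; omega
          refine ⟨(⟨(j:ℕ) - 1, by have := j.isLt; omega⟩, false), trivial, ?_⟩
          have h5 : z = i := Fin.ext (by simp [hz]; omega)
          have h6 : ∀ hh : (j:ℕ) - 1 + 1 < n, (⟨(j:ℕ) - 1 + 1, hh⟩ : Fin n) = j :=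
            fun hh => Fin.ext (by simp; omega)
          simp only [hf, if_neg Bool.false_ne_true]
          rw [hv]
          exact congrArg₂ (fun a b => a - b) (congrArg e h5) (congrArg e (h6 _))
        · exact absurd (hv ▸ hdiff' i j (by omega) (by
            have := hij; rw [Fin.lt_def] at this; omega)) hns
      · by_cases hi : (i:ℕ) = 0
        · have hj1 : 1 ≤ (j:ℕ) := by
            have := hij
            rw [Fin.lt_def] at this; omega
          refine ⟨(⟨(j:ℕ) - 1, by have := j.isLt; omega⟩, true), trivial, ?_⟩
          have h5 : z = i := Fin.ext (by simp [hz]; omega)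
          have h6 : ∀ hh : (j:ℕ) - 1 + 1 < n, (⟨(j:ℕ) - 1 + 1, hh⟩ : Fin n) = j :=
            fun hh => Fin.ext (by simp; omega)
          simp only [hf, if_pos rfl]
          rw [hv]
          exact congrArg₂ (fun a b => a + b) (congrArg e h5) (congrArg e (h6 _))
        · exact absurd (hv ▸ hsum i j (by omega) (by
            have := hij; rw [Fin.lt_def] at this; omega)) hns
    calc Set.ncard {v | v ∈ Sp ∧ v ∉ W}
        ≤ (f '' Set.univ).ncard :=
          Set.ncard_le_ncard hsub (Set.finite_univ.image _)
      _ ≤ (Set.univ : Set (Fin (n-1) × Bool)).ncard := Set.ncard_image_le Set.finite_univ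
      _ = 2 * n - 2 := by rw [Set.ncard_univ]; simp [Nat.card_eq_fintype_card]; omega
  -- lower bound for every k
  have hlbAll : ∀ k : Fin n, 2 * n - 2 ≤ rc (Set.range α \ {α k}) := by
    intro k
    have hkn := k.isLt
    rcases show (k:ℕ) < n - 2 ∨ (k:ℕ) = n - 2 ∨ (k:ℕ) = n - 1 by omega with hk | hk | hk
    · -- case 1 : k < n - 2
      set w : Fin n → ℝ := fun i => if (i:ℕ) ≤ (k:ℕ) then 1 else 0 with hwdef
      set I : Fin (n-1) → Fin n := fun t =>
        ⟨if (t:ℕ) < (k:ℕ) then (t:ℕ) else (k:ℕ), by have := t.isLt; split_ifs <;> omega⟩ with hIdef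
      set J : Fin (n-1) → Fin n := fun t =>
        ⟨if (t:ℕ) < (k:ℕ) then (k:ℕ) + 1 else (t:ℕ) + 1, by have := t.isLt; split_ifs <;> omega⟩ with hJdef
      have hIJ : ∀ t, I t < J t := by
        intro t
        rw [hIdef, hJdef]
        simp only [Fin.mk_lt_mk]
        split_ifs <;> omega
      have hwI : ∀ t, w (I t) = 1 := by
        intro t
        rw [hwdef, hIdef]
        simp only []
        split_ifs <;> (try rfl) <;> (try norm_num) <;> omega
      have hwJ : ∀ t, w (J t) = 0 := by
        intro t
        rw [hwdef, hJdef]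
        simp only []
        split_ifs <;> (try rfl) <;> (try norm_num) <;> omega
      refine lb k w (fun x => e (I x.1) + (if x.2 then (1:ℝ) else -1) • e (J x.1)) ?_ ?_ ?_ ?_
      · -- w vanishes on the generators other than α k
        rintro v ⟨⟨t, rfl⟩, hne⟩
        have htk : t ≠ k := fun hh => hne (by simp [hh])
        have htk' : (t:ℕ) ≠ (k:ℕ) := fun hh => htk (Fin.ext hh)
        by_cases ht : (t:ℕ) + 1 < n
        · simp only [α]
          rw [dif_pos ht, map_sub, L_single, L_single, hwdef]
          simp only []
          split_ifs <;> (try norm_num) <;> omega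
        · simp only [α]
          rw [dif_neg ht, map_add, L_single, L_single, hwdef]
          simp only []
          split_ifs <;> (try norm_num) <;> omega
      · -- injectivity
        rintro ⟨t, b⟩ ⟨t', b'⟩ hxy
        simp only [] at hxy
        obtain ⟨hI', hJ', hs⟩ := root_inj (hIJ t) (hIJ t')
          (by cases b <;> simp) (by cases b' <;> simp) hxy
        have hb : b = b' := by
          cases b <;> cases b' <;> first | rfl | (exfalso; norm_num at hs)
        subst hb
        have hIv := congrArg Fin.val hI'
        have hJv := congrArg Fin.val hJ'
        simp only [hIdef] at hIv
        simp only [hJdef] at hJv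
        obtain rfl : t = t' := Fin.ext (by split_ifs at hIv hJv <;> omega)
        rfl
      · -- membership in Sp
        rintro ⟨t, b⟩
        refine ⟨I t, J t, hIJ t, ?_⟩
        cases b
        · exact Or.inl (by norm_num [sub_eq_add_neg])
        · exact Or.inr (by norm_num)
      · -- nonvanishing of w on the witnesses
        rintro ⟨t, b⟩
        simp only []
        rw [map_add, map_smul, L_single, L_single, hwI, hwJ]
        cases b <;> norm_num
    · -- case 2 : k = n - 2
      set w : Fin n → ℝ := fun i => if (i:ℕ) = n - 1 then -1 else 1 with hwdef
      set I : Fin (n-1) × Bool → Fin n := fun x =>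
        ⟨if x.2 then (if (x.1:ℕ) < n - 2 then (x.1:ℕ) else 0) else (x.1:ℕ),
          by have := x.1.isLt; split_ifs <;> omega⟩ with hIdef
      set J : Fin (n-1) × Bool → Fin n := fun x =>
        ⟨if x.2 then (if (x.1:ℕ) < n - 2 then (x.1:ℕ) + 1 else 2) else n - 1,
          by have := x.1.isLt; split_ifs <;> omega⟩ with hJdef
      have hIJ : ∀ x, I x < J x := by
        rintro ⟨t, b⟩
        have := t.isLt
        rw [hIdef, hJdef]
        simp only [Fin.mk_lt_mk]
        split_ifs <;> omega
      refine lb k w (fun x => e (I x) + (if x.2 then (1:ℝ) else -1) • e (J x)) ?_ ?_ ?_ ?_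
      · rintro v ⟨⟨t, rfl⟩, hne⟩
        have htk : t ≠ k := fun hh => hne (by simp [hh])
        have htk' : (t:ℕ) ≠ (k:ℕ) := fun hh => htk (Fin.ext hh)
        by_cases ht : (t:ℕ) + 1 < n
        · simp only [α]
          rw [dif_pos ht, map_sub, L_single, L_single, hwdef]
          simp only []
          split_ifs <;> (try norm_num) <;> omega
        · simp only [α]
          rw [dif_neg ht, map_add, L_single, L_single, hwdef]
          simp only []
          split_ifs <;> (try norm_num) <;> omega
      · rintro ⟨t, b⟩ ⟨t', b'⟩ hxy
        simp only [] at hxy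
        obtain ⟨hI', hJ', hs⟩ := root_inj (hIJ (t, b)) (hIJ (t', b'))
          (by cases b <;> simp) (by cases b' <;> simp) hxy
        have hb : b = b' := by
          cases b <;> cases b' <;> first | rfl | (exfalso; norm_num at hs)
        subst hb
        have hIv := congrArg Fin.val hI'
        have hJv := congrArg Fin.val hJ'
        simp only [hIdef] at hIv
        simp only [hJdef] at hJv
        have htlt := t.isLt
        have ht'lt := t'.isLt
        cases b
        · obtain rfl : t = t' := Fin.ext (by simp at hIv; omega)
          rfl
        · simp only [if_true] at hIv hJv
          obtain rfl : t = t' := Fin.ext (by split_ifs at hIv hJv <;> omega)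
          rfl
      · rintro ⟨t, b⟩
        refine ⟨I (t, b), J (t, b), hIJ (t, b), ?_⟩
        cases b
        · exact Or.inl (by norm_num [sub_eq_add_neg])
        · exact Or.inr (by norm_num)
      · rintro ⟨t, b⟩
        simp only []
        rw [map_add, map_smul, L_single, L_single, hwdef]
        simp only [hIdef, hJdef]
        have := t.isLt
        cases b <;> simp only [Bool.false_eq_true, if_false, if_true] <;>
          split_ifs <;> (try norm_num) <;> omega
    · -- case 3 : k = n - 1
      set w : Fin n → ℝ := fun _ => 1 with hwdef
      set I : Fin (n-1) × Bool → Fin n := fun x =>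
        ⟨if x.2 then (if (x.1:ℕ) < n - 2 then (x.1:ℕ) else 0) else (x.1:ℕ),
          by have := x.1.isLt; split_ifs <;> omega⟩ with hIdef
      set J : Fin (n-1) × Bool → Fin n := fun x =>
        ⟨if x.2 then (if (x.1:ℕ) < n - 2 then (x.1:ℕ) + 2 else 3) else (x.1:ℕ) + 1,
          by have := x.1.isLt; split_ifs <;> omega⟩ with hJdef
      have hIJ : ∀ x, I x < J x := by
        rintro ⟨t, b⟩
        have := t.isLt
        rw [hIdef, hJdef]
        simp only [Fin.mk_lt_mk]
        split_ifs <;> omega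
      refine lb k w (fun x => e (I x) + (1:ℝ) • e (J x)) ?_ ?_ ?_ ?_
      · rintro v ⟨⟨t, rfl⟩, hne⟩
        have htk : t ≠ k := fun hh => hne (by simp [hh])
        have htk' : (t:ℕ) ≠ (k:ℕ) := fun hh => htk (Fin.ext hh)
        by_cases ht : (t:ℕ) + 1 < n
        · simp only [α]
          rw [dif_pos ht, map_sub, L_single, L_single, hwdef]
          norm_num
        · exact absurd (Fin.ext (show (t:ℕ) = (k:ℕ) by have := t.isLt; omega)) htk
      · rintro ⟨t, b⟩ ⟨t', b'⟩ hxy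
        simp only [] at hxy
        obtain ⟨hI', hJ', -⟩ := root_inj (hIJ (t, b)) (hIJ (t', b'))
          (Or.inl rfl) (Or.inl rfl) hxy
        have hIv := congrArg Fin.val hI'
        have hJv := congrArg Fin.val hJ'
        simp only [hIdef] at hIv
        simp only [hJdef] at hJv
        have htlt := t.isLt
        have ht'lt := t'.isLt
        cases b <;> cases b' <;> simp only [if_true, Bool.false_eq_true, if_false] at hIv hJv
        · obtain rfl : t = t' := Fin.ext (by omega)
          rfl
        · exfalso; split_ifs at hIv hJv <;> omega
        · exfalso; split_ifs at hIv hJv <;> omega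
        · obtain rfl : t = t' := Fin.ext (by split_ifs at hIv hJv <;> omega)
          rfl
      · rintro ⟨t, b⟩
        exact ⟨I (t, b), J (t, b), hIJ (t, b), Or.inr (by norm_num)⟩
      · rintro ⟨t, b⟩
        rw [map_add, map_smul, L_single, L_single, hwdef]
        norm_num
  -- conclusion
  have hne : Nonempty (Fin n) := ⟨⟨0, by omega⟩⟩
  refine le_antisymm ?_ (le_ciInf hlbAll)
  exact le_trans (ciInf_le (OrderBot.bddBelow _) z) hub
end

section
/- Let n ≥ 5. In the root system of type D_n, the minimum, over unordered pairs {α_i, α_j} of distinct simple roots in Π, of the resonant codimension of Π ∖ {α_i, α_j} equals 4n − 6. -/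
open Finset

namespace Stmt11

section counting
variable {n : ℕ}

lemma bool_split (Q : Fin n × Fin n × Bool → Prop) [DecidablePred Q]
    [DecidablePred fun p : Fin n × Fin n => Q (p.1, p.2, false)]
    [DecidablePred fun p : Fin n × Fin n => Q (p.1, p.2, true)] :
    (univ.filter Q).card =
      (univ.filter fun p : Fin n × Fin n => Q (p.1, p.2, false)).card +
      (univ.filter fun p : Fin n × Fin n => Q (p.1, p.2, true)).card := by
  classical
  have hinj0 : Function.Injective (fun p : Fin n × Fin n => (p.1, p.2, false)) := by
    intro p q h; simpa [Prod.ext_iff] using h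
  have hinj1 : Function.Injective (fun p : Fin n × Fin n => (p.1, p.2, true)) := by
    intro p q h; simpa [Prod.ext_iff] using h
  have hU : univ.filter Q =
      ((univ.filter fun p : Fin n × Fin n => Q (p.1, p.2, false)).image
        fun p => (p.1, p.2, false)) ∪
      ((univ.filter fun p : Fin n × Fin n => Q (p.1, p.2, true)).image
        fun p => (p.1, p.2, true)) := by
    ext ⟨a, b, s⟩
    cases s <;> simp [Prod.ext_iff]
  rw [hU, Finset.card_union_of_disjoint, Finset.card_image_of_injective _ hinj0,
    Finset.card_image_of_injective _ hinj1]
  · rw [Finset.disjoint_left]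
    rintro ⟨a, b, s⟩ h0 h1
    simp only [Finset.mem_image] at h0 h1
    rcases h0 with ⟨p, _, hp⟩; rcases h1 with ⟨q, _, hq⟩
    rw [← hq] at hp
    simp [Prod.ext_iff] at hp

lemma two_mul_card_lt {α : Type*} [LinearOrder α] [DecidableEq α] (A : Finset α) :
    2 * ((A ×ˢ A).filter fun p => p.1 < p.2).card = A.card * A.card - A.card := by
  have hswap : ((A ×ˢ A).filter fun p => p.1 < p.2).card
      = ((A ×ˢ A).filter fun p => p.2 < p.1).card := by
    apply Finset.card_nbij' (i := Prod.swap) (j := Prod.swap) <;>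
      simp +contextual [Set.MapsTo, Set.LeftInvOn, Set.RightInvOn, Finset.mem_filter, Finset.mem_product, and_comm]
  have hU : ((A ×ˢ A).filter fun p => p.1 < p.2) ∪ ((A ×ˢ A).filter fun p => p.2 < p.1)
      = A.offDiag := by
    rw [← Finset.filter_or]
    ext p
    simp only [Finset.mem_filter, Finset.mem_offDiag, Finset.mem_product]
    constructor
    · rintro ⟨⟨h1, h2⟩, h3 | h3⟩
      · exact ⟨h1, h2, ne_of_lt h3⟩
      · exact ⟨h1, h2, (ne_of_lt h3).symm⟩
    · rintro ⟨h1, h2, h3⟩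
      exact ⟨⟨h1, h2⟩, lt_or_gt_of_ne h3⟩
  have hdisj : Disjoint ((A ×ˢ A).filter fun p => p.1 < p.2)
      ((A ×ˢ A).filter fun p => p.2 < p.1) := by
    rw [Finset.disjoint_left]
    intro p hp hq
    simp only [Finset.mem_filter] at hp hq
    exact absurd (hp.2.trans hq.2) (lt_irrefl _)
  have := Finset.card_union_of_disjoint hdisj
  rw [hU, Finset.offDiag_card] at this
  omega

lemma card_pairs_block (P : Fin n → Prop) [DecidablePred P] :
    2 * ((univ.filter fun p : Fin n × Fin n => p.1 < p.2 ∧ P p.1 ∧ P p.2).card)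
      = (univ.filter P).card * (univ.filter P).card - (univ.filter P).card := by
  have h : (univ.filter fun p : Fin n × Fin n => p.1 < p.2 ∧ P p.1 ∧ P p.2)
      = ((univ.filter P) ×ˢ (univ.filter P)).filter fun p => p.1 < p.2 := by
    ext p
    simp only [Finset.mem_filter, Finset.mem_univ, true_and, Finset.mem_product]
    tauto
  rw [h, two_mul_card_lt]

lemma card_coe_Ico (hn : 0 < n) (l u : ℕ) (hu : u ≤ n) :
    (univ.filter fun t : Fin n => l ≤ (t : ℕ) ∧ (t : ℕ) < u).card = u - l := by
  rw [← Nat.card_Ico l u]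
  refine Finset.card_bij' (fun a _ => (a : ℕ))
    (fun m hm => (⟨m, lt_of_lt_of_le (Finset.mem_Ico.mp hm).2 hu⟩ : Fin n)) ?_ ?_ ?_ ?_
  · intro a ha
    simp only [Finset.mem_filter, Finset.mem_univ, true_and] at ha
    simp [Finset.mem_Ico, ha.1, ha.2]
  · intro m hm
    simp only [Finset.mem_Ico] at hm
    simp [hm.1, hm.2]
  · intro a ha; rfl
  · intro m hm; rfl

end counting

noncomputable section
variable {n : ℕ}

def ee (n : ℕ) (i : Fin n) : Fin n → ℝ := Pi.single i 1

lemma ee_apply (i j : Fin n) : ee n i j = if j = i then (1:ℝ) else 0 := by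
  simp [ee, Pi.single_apply]

def rt (n : ℕ) (x : Fin n × Fin n × Bool) : Fin n → ℝ :=
  if x.2.2 then ee n x.1 + ee n x.2.1 else ee n x.1 - ee n x.2.1

lemma rt_apply (x : Fin n × Fin n × Bool) (c : Fin n) :
    rt n x c = (if c = x.1 then (1:ℝ) else 0) +
      (if x.2.2 then (1:ℝ) else -1) * (if c = x.2.1 then (1:ℝ) else 0) := by
  rcases x with ⟨a, b, s⟩
  cases s <;> simp only [rt, Bool.false_eq_true, if_true, if_false, Pi.add_apply,
    Pi.sub_apply, ee_apply] <;> split_ifs <;> ring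

lemma rt_fst (a b : Fin n) (s : Bool) (hab : a ≠ b) : rt n (a, b, s) a = 1 := by
  rw [rt_apply]; simp [hab]

lemma rt_snd (a b : Fin n) (s : Bool) (hab : b ≠ a) :
    rt n (a, b, s) b = if s then 1 else -1 := by
  rw [rt_apply]; cases s <;> simp [hab]

lemma rt_other (a b c : Fin n) (s : Bool) (h1 : c ≠ a) (h2 : c ≠ b) :
    rt n (a, b, s) c = 0 := by
  rw [rt_apply]; simp [h1, h2]

lemma rt_injOn : Set.InjOn (rt n) {x | x.1 < x.2.1} := by
  rintro ⟨a, b, s⟩ hab ⟨a', b', s'⟩ hab' h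
  simp only [Set.mem_setOf_eq] at hab hab'
  have hne : a ≠ b := ne_of_lt hab
  have hne' : a' ≠ b' := ne_of_lt hab'
  have haa : a = a' := by
    by_contra hcon
    have h1 : rt n (a', b', s') a = 1 := by rw [← h]; exact rt_fst _ _ _ hne
    have h2 : rt n (a, b, s) a' = 1 := by rw [h]; exact rt_fst _ _ _ hne'
    have hab'' : a = b' := by
      by_contra hc2
      rw [rt_other _ _ _ _ (hcon) hc2] at h1; norm_num at h1
    have ha'b : a' = b := by
      by_contra hc2
      rw [rt_other _ _ _ _ (Ne.symm hcon) hc2] at h2; norm_num at h2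
    rw [hab''] at hab; rw [ha'b] at hab'
    exact absurd (hab'.trans hab) (lt_irrefl b)
  subst haa
  have hbb : b = b' := by
    by_contra hcon
    have h1 : rt n (a, b', s') b = 0 := rt_other _ _ _ _ (Ne.symm hne) hcon
    rw [← h, rt_snd _ _ _ (Ne.symm hne)] at h1
    cases s <;> norm_num at h1
  subst hbb
  have hss : s = s' := by
    have h1 := congrFun h b
    rw [rt_snd _ _ _ (Ne.symm hne), rt_snd _ _ _ (Ne.symm hne)] at h1
    revert h1; cases s <;> cases s' <;> norm_num
  rw [hss]

def SpS (n : ℕ) : Set (Fin n → ℝ) :=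
  {v | ∃ i j : Fin n, i < j ∧ (v = ee n i - ee n j ∨ v = ee n i + ee n j)}

lemma transfer (Q : (Fin n → ℝ) → Prop)
    [DecidablePred fun x : Fin n × Fin n × Bool => x.1 < x.2.1 ∧ Q (rt n x)] :
    {v | v ∈ SpS n ∧ Q v}.ncard =
      ((univ : Finset (Fin n × Fin n × Bool)).filter
        fun x => x.1 < x.2.1 ∧ Q (rt n x)).card := by
  have hset : {v | v ∈ SpS n ∧ Q v} =
      rt n '' ↑((univ : Finset (Fin n × Fin n × Bool)).filter
        fun x => x.1 < x.2.1 ∧ Q (rt n x)) := by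
    ext v
    simp only [Set.mem_setOf_eq, Set.mem_image, Finset.coe_filter, Finset.mem_univ, true_and,
      Set.mem_setOf_eq]
    constructor
    · rintro ⟨⟨i, j, hij, hv | hv⟩, hQ⟩
      · exact ⟨(i, j, false), ⟨hij, by rwa [show rt n (i,j,false) = v from hv.symm]⟩,
          hv.symm⟩
      · exact ⟨(i, j, true), ⟨hij, by rwa [show rt n (i,j,true) = v from hv.symm]⟩,
          hv.symm⟩
    · rintro ⟨⟨i, j, s⟩, ⟨hij, hQ⟩, rfl⟩
      refine ⟨⟨i, j, hij, ?_⟩, hQ⟩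
      cases s
      · left; rfl
      · right; rfl
  rw [hset, Set.ncard_image_of_injOn, Set.ncard_coe_finset]
  intro x hx y hy hxy
  refine rt_injOn ?_ ?_ hxy
  · exact (Finset.mem_filter.mp (Finset.mem_coe.mp hx)).2.1
  · exact (Finset.mem_filter.mp (Finset.mem_coe.mp hy)).2.1

def L (c : Fin n → ℝ) : (Fin n → ℝ) →ₗ[ℝ] ℝ := ∑ t, c t • LinearMap.proj t

lemma L_apply (c v : Fin n → ℝ) : L c v = ∑ t, c t * v t := by
  simp [L, LinearMap.sum_apply]

lemma L_ee (c : Fin n → ℝ) (i : Fin n) : L c (ee n i) = c i := by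
  rw [L_apply]
  rw [Finset.sum_eq_single i]
  · simp [ee, Pi.single_apply]
  · intro b _ hb; simp [ee, Pi.single_apply, Ne.symm hb]
  · simp

lemma L_rt (c : Fin n → ℝ) (a b : Fin n) (s : Bool) :
    L c (rt n (a, b, s)) = c a + (if s then 1 else -1) * c b := by
  cases s <;> simp [rt, map_add, map_sub, L_ee] <;> ring

lemma L_rt_false (c : Fin n → ℝ) (a b : Fin n) :
    L c (rt n (a, b, false)) = c a - c b := by
  rw [L_rt]; norm_num; ring

lemma L_rt_true (c : Fin n → ℝ) (a b : Fin n) :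
    L c (rt n (a, b, true)) = c a + c b := by
  rw [L_rt]; norm_num

lemma span_vanish (c : Fin n → ℝ) (S : Set (Fin n → ℝ))
    (h : ∀ w ∈ S, L c w = 0) {v : Fin n → ℝ}
    (hv : v ∈ Submodule.span ℝ S) : L c v = 0 := by
  have hS : S ⊆ (LinearMap.ker (L c) : Submodule ℝ (Fin n → ℝ)) := fun w hw =>
    LinearMap.mem_ker.mpr (h w hw)
  exact LinearMap.mem_ker.mp (Submodule.span_le.mpr hS hv)

def aa (n : ℕ) (hn : 5 ≤ n) (k : Fin n) : Fin n → ℝ :=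
  if h : (k : ℕ) + 1 < n then ee n k - ee n ⟨(k : ℕ) + 1, h⟩
  else ee n ⟨n - 2, (by omega : n - 2 < n + 0)⟩ + ee n ⟨n - 1, (by omega : n - 1 < n + 0)⟩

lemma L_aa (c : Fin n → ℝ) (hn : 5 ≤ n) (k : Fin n) (h : (k : ℕ) + 1 < n) :
    L c (aa n hn k) = c k - c ⟨(k : ℕ) + 1, h⟩ := by
  rw [aa, dif_pos h, map_sub, L_ee, L_ee]

lemma L_aa_last (c : Fin n → ℝ) (hn : 5 ≤ n) (k : Fin n) (h : ¬((k : ℕ) + 1 < n)) :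
    L c (aa n hn k) = c ⟨n - 2, (by omega : n - 2 < n + 0)⟩ + c ⟨n - 1, (by omega : n - 1 < n + 0)⟩ := by
  rw [aa, dif_neg h, map_add, L_ee, L_ee]

open Classical in
lemma case_core (hn : 5 ≤ n) (S : Set (Fin n → ℝ)) (c1 c2 : Fin n → ℝ)
    (h1 : ∀ w ∈ S, L c1 w = 0) (h2 : ∀ w ∈ S, L c2 w = 0)
    (hcard : 2 * ((univ.filter fun x : Fin n × Fin n × Bool =>
        x.1 < x.2.1 ∧ L c1 (rt n x) = 0 ∧ L c2 (rt n x) = 0).card)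
      ≤ 2 * n * n + 12 - 10 * n) :
    4 * n - 6 ≤ ((univ : Finset (Fin n × Fin n × Bool)).filter fun x =>
      x.1 < x.2.1 ∧ rt n x ∉ Submodule.span ℝ S).card := by
  set T : Finset (Fin n × Fin n × Bool) := univ.filter fun x => x.1 < x.2.1 with hT
  set K : Finset (Fin n × Fin n × Bool) := univ.filter fun x =>
    x.1 < x.2.1 ∧ L c1 (rt n x) = 0 ∧ L c2 (rt n x) = 0 with hK
  have hKT : K ⊆ T := by
    intro x hx
    simp only [hK, hT, Finset.mem_filter] at hx ⊢
    exact ⟨hx.1, hx.2.1⟩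
  have hsub : T \ K ⊆ (univ.filter fun x =>
      x.1 < x.2.1 ∧ rt n x ∉ Submodule.span ℝ S) := by
    intro x hx
    rw [Finset.mem_sdiff] at hx
    obtain ⟨hxT, hxK⟩ := hx
    simp only [hT, hK, Finset.mem_filter, Finset.mem_univ, true_and] at hxT hxK ⊢
    refine ⟨hxT, fun hmem => hxK ⟨hxT, ?_, ?_⟩⟩
    · exact span_vanish c1 S h1 hmem
    · exact span_vanish c2 S h2 hmem
  have hTcard : 2 * T.card = 2 * (n * n - n) := by
    have := bool_split (n := n) (fun x => x.1 < x.2.1)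
    have hp : (univ.filter fun p : Fin n × Fin n => p.1 < p.2)
        = ((univ : Finset (Fin n)) ×ˢ (univ : Finset (Fin n))).filter fun p => p.1 < p.2 := by
      rw [Finset.univ_product_univ]
    have h2c := two_mul_card_lt (univ : Finset (Fin n))
    rw [Finset.card_univ, Fintype.card_fin] at h2c
    simp only [hT]
    rw [this]
    simp only [hp]
    omega
  have hcard2 : (T \ K).card = T.card - K.card := Finset.card_sdiff_of_subset hKT
  have hle := Finset.card_le_card hsub
  have hKT2 := Finset.card_le_card hKT
  have hnn : 5 * n ≤ n * n := Nat.mul_le_mul_right n hn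
  have hassoc : 2 * n * n = 2 * (n * n) := by ring
  omega

lemma arith1 (n μ ν cm cp k1 k2 k3 : ℕ) (hn : 5 ≤ n) (hμν : μ < ν) (hν : ν + 3 ≤ n)
    (hKm : cm ≤ k1 + k2 + k3) (hKp : cp ≤ k3)
    (e1 : 2 * k1 = (μ + 1) * (μ + 1) - (μ + 1))
    (e2 : 2 * k2 = (ν - μ) * (ν - μ) - (ν - μ))
    (e3 : 2 * k3 = (n - 1 - ν) * (n - 1 - ν) - (n - 1 - ν)) :
    2 * (cm + cp) ≤ 2 * n * n + 12 - 10 * n := by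
  obtain ⟨b, hb⟩ : ∃ b, ν - μ = b + 1 := ⟨ν - μ - 1, by omega⟩
  obtain ⟨c, hc⟩ : ∃ c, n - 1 - ν = c + 2 := ⟨n - 1 - ν - 2, by omega⟩
  set a := μ
  have hsum : (a + 1) + (b + 1) + (c + 2) = n := by omega
  rw [hb] at e2; rw [hc] at e3
  have f1 : 2 * k1 = (a + 1) * a := by rw [e1]; cases a <;> ring_nf <;> omega
  have f2 : 2 * k2 = (b + 1) * b := by rw [e2]; cases b <;> ring_nf <;> omega
  have f3 : 2 * k3 = (c + 2) * (c + 1) := by rw [e3]; ring_nf; omega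
  have key : 2 * cm + 2 * cp + 10 * n ≤ 2 * n * n + 12 := by nlinarith
  omega

lemma arith2 (n μ cm cp k1 k2 : ℕ) (hn : 5 ≤ n) (hμ : μ + 3 ≤ n)
    (hKm : cm ≤ k1 + k2) (hKp : cp ≤ n - 2 - μ)
    (e1 : 2 * k1 = (μ + 1) * (μ + 1) - (μ + 1))
    (e2 : 2 * k2 = (n - 2 - μ) * (n - 2 - μ) - (n - 2 - μ)) :
    2 * (cm + cp) ≤ 2 * n * n + 12 - 10 * n := by
  obtain ⟨b, hb⟩ : ∃ b, n - 2 - μ = b + 1 := ⟨n - 2 - μ - 1, by omega⟩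
  set a := μ
  have hsum : (a + 1) + (b + 1) = n - 1 := by omega
  have hsum' : (a + 1) + (b + 1) + 1 = n := by omega
  rw [hb] at e2 hKp
  have f1 : 2 * k1 = (a + 1) * a := by rw [e1]; cases a <;> ring_nf <;> omega
  have f2 : 2 * k2 = (b + 1) * b := by rw [e2]; cases b <;> ring_nf <;> omega
  have hb2 : 2 ≤ a + b := by omega
  have key : 2 * cm + 2 * cp + 10 * n ≤ 2 * n * n + 12 := by nlinarith
  omega

lemma arith3 (n μ cm k1 k2 : ℕ) (hn : 5 ≤ n) (hμ : μ + 2 ≤ n)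
    (hKm : cm ≤ k1 + k2)
    (e1 : 2 * k1 = (μ + 1) * (μ + 1) - (μ + 1))
    (e2 : 2 * k2 = (n - 1 - μ) * (n - 1 - μ) - (n - 1 - μ)) :
    2 * (cm + 0) ≤ 2 * n * n + 12 - 10 * n := by
  obtain ⟨b, hb⟩ : ∃ b, n - 1 - μ = b + 1 := ⟨n - 1 - μ - 1, by omega⟩
  set a := μ
  have hsum : (a + 1) + (b + 1) = n := by omega
  rw [hb] at e2
  have f1 : 2 * k1 = (a + 1) * a := by rw [e1]; cases a <;> ring_nf <;> omega
  have f2 : 2 * k2 = (b + 1) * b := by rw [e2]; cases b <;> ring_nf <;> omega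
  have hab : 3 ≤ a + b := by omega
  have key : 2 * cm + 10 * n ≤ 2 * n * n + 12 := by nlinarith
  omega

end

end Stmt11
namespace Stmt11
noncomputable section
variable {n : ℕ}
open Finset

lemma hcard_case1 (hn : 5 ≤ n) (μ ν : ℕ) (hμν : μ < ν) (hν : ν + 3 ≤ n) :
    2 * ((univ.filter fun x : Fin n × Fin n × Bool =>
        x.1 < x.2.1 ∧ L (fun t => if (t : ℕ) ≤ μ then (1:ℝ) else 0) (rt n x) = 0 ∧
          L (fun t => if μ < (t : ℕ) ∧ (t : ℕ) ≤ ν then (1:ℝ) else 0) (rt n x) = 0).card)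
      ≤ 2 * n * n + 12 - 10 * n := by
  set c1 : Fin n → ℝ := fun t => if (t : ℕ) ≤ μ then (1:ℝ) else 0 with hc1
  set c2 : Fin n → ℝ := fun t => if μ < (t : ℕ) ∧ (t : ℕ) ≤ ν then (1:ℝ) else 0 with hc2
  set P1 : Fin n → Prop := fun t => 0 ≤ (t : ℕ) ∧ (t : ℕ) < μ + 1 with hP1
  set P2 : Fin n → Prop := fun t => μ + 1 ≤ (t : ℕ) ∧ (t : ℕ) < ν + 1 with hP2
  set P3 : Fin n → Prop := fun t => ν + 1 ≤ (t : ℕ) ∧ (t : ℕ) < n with hP3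
  set F1 := univ.filter fun p : Fin n × Fin n => p.1 < p.2 ∧ P1 p.1 ∧ P1 p.2 with hF1
  set F2 := univ.filter fun p : Fin n × Fin n => p.1 < p.2 ∧ P2 p.1 ∧ P2 p.2 with hF2
  set F3 := univ.filter fun p : Fin n × Fin n => p.1 < p.2 ∧ P3 p.1 ∧ P3 p.2 with hF3
  have s1 : (univ.filter P1).card = μ + 1 := by
    have h := card_coe_Ico (n := n) (by omega) 0 (μ + 1) (by omega)
    rw [show μ + 1 - 0 = μ + 1 by omega] at h
    exact h
  have s2 : (univ.filter P2).card = ν - μ := by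
    have h := card_coe_Ico (n := n) (by omega) (μ + 1) (ν + 1) (by omega)
    rw [show ν + 1 - (μ + 1) = ν - μ by omega] at h
    exact h
  have s3 : (univ.filter P3).card = n - 1 - ν := by
    have h := card_coe_Ico (n := n) (by omega) (ν + 1) n (by omega)
    rw [show n - (ν + 1) = n - 1 - ν by omega] at h
    exact h
  have e1 : 2 * F1.card = (μ + 1) * (μ + 1) - (μ + 1) := by
    rw [hF1, card_pairs_block P1, s1]
  have e2 : 2 * F2.card = (ν - μ) * (ν - μ) - (ν - μ) := by
    rw [hF2, card_pairs_block P2, s2]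
  have e3 : 2 * F3.card = (n - 1 - ν) * (n - 1 - ν) - (n - 1 - ν) := by
    rw [hF3, card_pairs_block P3, s3]
  rw [bool_split]
  simp only [L_rt_false, L_rt_true]
  have hKm : (univ.filter fun p : Fin n × Fin n =>
      p.1 < p.2 ∧ c1 p.1 - c1 p.2 = 0 ∧ c2 p.1 - c2 p.2 = 0).card
      ≤ F1.card + F2.card + F3.card := by
    refine le_trans (Finset.card_le_card ?_) (le_trans (Finset.card_union_le _ _)
      (by exact Nat.add_le_add_right (Finset.card_union_le F1 F2) F3.card))
    intro p hp
    simp only [Finset.mem_filter, Finset.mem_univ, true_and, Finset.mem_union,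
      hF1, hF2, hF3, hP1, hP2, hP3, hc1, hc2] at hp ⊢
    obtain ⟨hlt, hA, hB⟩ := hp
    have hlt' : (p.1 : ℕ) < (p.2 : ℕ) := hlt
    refine ?_
    split_ifs at hA hB <;> (try norm_num at hA) <;> (try norm_num at hB) <;> (try norm_num) <;> omega
  have hKp : (univ.filter fun p : Fin n × Fin n =>
      p.1 < p.2 ∧ c1 p.1 + c1 p.2 = 0 ∧ c2 p.1 + c2 p.2 = 0).card ≤ F3.card := by
    refine Finset.card_le_card ?_
    intro p hp
    simp only [Finset.mem_filter, Finset.mem_univ, true_and,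
      hF3, hP3, hc1, hc2] at hp ⊢
    obtain ⟨hlt, hA, hB⟩ := hp
    have hlt' : (p.1 : ℕ) < (p.2 : ℕ) := hlt
    refine ⟨hlt, ?_, ?_⟩ <;> split_ifs at hA hB <;> (try norm_num at hA) <;> (try norm_num at hB) <;> (try norm_num) <;> omega
  exact arith1 n μ ν _ _ F1.card F2.card F3.card hn hμν hν hKm hKp e1 e2 e3

end
end Stmt11

namespace Stmt11
noncomputable section
open Finset
variable {n : ℕ}

lemma hcard_case2 (hn : 5 ≤ n) (μ : ℕ) (hμ : μ + 3 ≤ n) :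
    2 * ((univ.filter fun x : Fin n × Fin n × Bool =>
        x.1 < x.2.1 ∧ L (fun t => if (t : ℕ) ≤ μ then (1:ℝ) else 0) (rt n x) = 0 ∧
          L (fun t => if (t : ℕ) ≤ μ then (0:ℝ) else if (t : ℕ) ≤ n - 2 then 1 else -1)
            (rt n x) = 0).card)
      ≤ 2 * n * n + 12 - 10 * n := by
  set c1 : Fin n → ℝ := fun t => if (t : ℕ) ≤ μ then (1:ℝ) else 0 with hc1
  set c2 : Fin n → ℝ := fun t => if (t : ℕ) ≤ μ then (0:ℝ) else if (t : ℕ) ≤ n - 2 then 1 else -1 with hc2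
  set P1 : Fin n → Prop := fun t => 0 ≤ (t : ℕ) ∧ (t : ℕ) < μ + 1 with hP1
  set P2 : Fin n → Prop := fun t => μ + 1 ≤ (t : ℕ) ∧ (t : ℕ) < n - 1 with hP2
  set F1 := univ.filter fun p : Fin n × Fin n => p.1 < p.2 ∧ P1 p.1 ∧ P1 p.2 with hF1
  set F2 := univ.filter fun p : Fin n × Fin n => p.1 < p.2 ∧ P2 p.1 ∧ P2 p.2 with hF2
  have s1 : (univ.filter P1).card = μ + 1 := by
    have h := card_coe_Ico (n := n) (by omega) 0 (μ + 1) (by omega)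
    rw [show μ + 1 - 0 = μ + 1 by omega] at h
    exact h
  have s2 : (univ.filter P2).card = n - 2 - μ := by
    have h := card_coe_Ico (n := n) (by omega) (μ + 1) (n - 1) (by omega)
    rw [show n - 1 - (μ + 1) = n - 2 - μ by omega] at h
    exact h
  have e1 : 2 * F1.card = (μ + 1) * (μ + 1) - (μ + 1) := by
    rw [hF1, card_pairs_block P1, s1]
  have e2 : 2 * F2.card = (n - 2 - μ) * (n - 2 - μ) - (n - 2 - μ) := by
    rw [hF2, card_pairs_block P2, s2]
  rw [bool_split]
  simp only [L_rt_false, L_rt_true]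
  have hKm : (univ.filter fun p : Fin n × Fin n =>
      p.1 < p.2 ∧ c1 p.1 - c1 p.2 = 0 ∧ c2 p.1 - c2 p.2 = 0).card
      ≤ F1.card + F2.card := by
    refine le_trans (Finset.card_le_card ?_) (Finset.card_union_le _ _)
    intro p hp
    simp only [Finset.mem_filter, Finset.mem_univ, true_and, Finset.mem_union,
      hF1, hF2, hP1, hP2, hc1, hc2] at hp ⊢
    obtain ⟨hlt, hA, hB⟩ := hp
    have hlt' : (p.1 : ℕ) < (p.2 : ℕ) := hlt
    have h1 := p.1.isLt
    have h2 := p.2.isLt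
    split_ifs at hA hB <;> (try norm_num at hA) <;> (try norm_num at hB) <;> (try norm_num) <;> omega
  have hKp : (univ.filter fun p : Fin n × Fin n =>
      p.1 < p.2 ∧ c1 p.1 + c1 p.2 = 0 ∧ c2 p.1 + c2 p.2 = 0).card ≤ n - 2 - μ := by
    rw [← s2]
    refine Finset.card_le_card_of_injOn Prod.fst ?_ ?_
    · intro p hp
      simp only [Finset.mem_coe, Finset.mem_filter, Finset.mem_univ, true_and, hP2, hc1, hc2] at hp ⊢
      obtain ⟨hlt, hA, hB⟩ := hp
      have hlt' : (p.1 : ℕ) < (p.2 : ℕ) := hlt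
      have h1 := p.1.isLt
      have h2 := p.2.isLt
      split_ifs at hA hB <;> (try norm_num at hA) <;> (try norm_num at hB) <;> (try norm_num) <;> omega
    · intro p hp q hq hpq
      simp only [Finset.coe_filter, Finset.mem_univ, true_and, Set.mem_setOf_eq,
        hc1, hc2] at hp hq
      obtain ⟨hlt, hA, hB⟩ := hp
      obtain ⟨hlt2, hA2, hB2⟩ := hq
      have hlt' : (p.1 : ℕ) < (p.2 : ℕ) := hlt
      have hlt2' : (q.1 : ℕ) < (q.2 : ℕ) := hlt2
      have h1 := p.1.isLt; have h2 := p.2.isLt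
      have h3 := q.1.isLt; have h4 := q.2.isLt
      have hv2 : (p.2 : ℕ) = (q.2 : ℕ) := by
        split_ifs at hA hB hA2 hB2 <;> (try norm_num at hA) <;> (try norm_num at hB) <;> (try norm_num at hA2) <;> (try norm_num at hB2) <;> omega
      have : p.2 = q.2 := Fin.ext hv2
      exact Prod.ext hpq this
  exact arith2 n μ _ _ F1.card F2.card hn hμ hKm hKp e1 e2

lemma hcard_case3 (hn : 5 ≤ n) (μ : ℕ) (hμ : μ + 2 ≤ n) :
    2 * ((univ.filter fun x : Fin n × Fin n × Bool =>
        x.1 < x.2.1 ∧ L (fun t => if (t : ℕ) ≤ μ then (1:ℝ) else 0) (rt n x) = 0 ∧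
          L (fun t => if μ < (t : ℕ) then (1:ℝ) else 0) (rt n x) = 0).card)
      ≤ 2 * n * n + 12 - 10 * n := by
  set c1 : Fin n → ℝ := fun t => if (t : ℕ) ≤ μ then (1:ℝ) else 0 with hc1
  set c2 : Fin n → ℝ := fun t => if μ < (t : ℕ) then (1:ℝ) else 0 with hc2
  set P1 : Fin n → Prop := fun t => 0 ≤ (t : ℕ) ∧ (t : ℕ) < μ + 1 with hP1
  set P2 : Fin n → Prop := fun t => μ + 1 ≤ (t : ℕ) ∧ (t : ℕ) < n with hP2
  set F1 := univ.filter fun p : Fin n × Fin n => p.1 < p.2 ∧ P1 p.1 ∧ P1 p.2 with hF1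
  set F2 := univ.filter fun p : Fin n × Fin n => p.1 < p.2 ∧ P2 p.1 ∧ P2 p.2 with hF2
  have s1 : (univ.filter P1).card = μ + 1 := by
    have h := card_coe_Ico (n := n) (by omega) 0 (μ + 1) (by omega)
    rw [show μ + 1 - 0 = μ + 1 by omega] at h
    exact h
  have s2 : (univ.filter P2).card = n - 1 - μ := by
    have h := card_coe_Ico (n := n) (by omega) (μ + 1) n (by omega)
    rw [show n - (μ + 1) = n - 1 - μ by omega] at h
    exact h
  have e1 : 2 * F1.card = (μ + 1) * (μ + 1) - (μ + 1) := by
    rw [hF1, card_pairs_block P1, s1]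
  have e2 : 2 * F2.card = (n - 1 - μ) * (n - 1 - μ) - (n - 1 - μ) := by
    rw [hF2, card_pairs_block P2, s2]
  rw [bool_split]
  simp only [L_rt_false, L_rt_true]
  have hKm : (univ.filter fun p : Fin n × Fin n =>
      p.1 < p.2 ∧ c1 p.1 - c1 p.2 = 0 ∧ c2 p.1 - c2 p.2 = 0).card
      ≤ F1.card + F2.card := by
    refine le_trans (Finset.card_le_card ?_) (Finset.card_union_le _ _)
    intro p hp
    simp only [Finset.mem_filter, Finset.mem_univ, true_and, Finset.mem_union,
      hF1, hF2, hP1, hP2, hc1, hc2] at hp ⊢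
    obtain ⟨hlt, hA, hB⟩ := hp
    have hlt' : (p.1 : ℕ) < (p.2 : ℕ) := hlt
    have h1 := p.1.isLt
    have h2 := p.2.isLt
    split_ifs at hA hB <;> (try norm_num at hA) <;> (try norm_num at hB) <;> (try norm_num) <;> omega
  have hKp : (univ.filter fun p : Fin n × Fin n =>
      p.1 < p.2 ∧ c1 p.1 + c1 p.2 = 0 ∧ c2 p.1 + c2 p.2 = 0).card = 0 := by
    rw [Finset.card_eq_zero]
    rw [Finset.eq_empty_iff_forall_notMem]
    intro p hp
    simp only [Finset.mem_filter, Finset.mem_univ, true_and, hc1, hc2] at hp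
    obtain ⟨hlt, hA, hB⟩ := hp
    split_ifs at hA hB <;> (try norm_num at hA) <;> (try norm_num at hB) <;> omega
  rw [hKp]
  exact arith3 n μ _ F1.card F2.card hn hμ hKm e1 e2

end
end Stmt11

namespace Stmt11
noncomputable section
open Finset
variable {n : ℕ}

open Classical in
lemma lower_bound' (hn : 5 ≤ n) (i j : Fin n) (hij : (i : ℕ) < (j : ℕ)) :
    4 * n - 6 ≤ ((univ : Finset (Fin n × Fin n × Bool)).filter fun x =>
      x.1 < x.2.1 ∧ rt n x ∉ Submodule.span ℝ
        (Set.range (aa n hn) \ {aa n hn i, aa n hn j})).card := by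
  have hi := i.isLt
  have hj := j.isLt
  obtain ⟨μ, hμdef⟩ : ∃ m, (i : ℕ) = m := ⟨_, rfl⟩
  obtain ⟨ν, hνdef⟩ : ∃ m, (j : ℕ) = m := ⟨_, rfl⟩
  rw [hμdef] at hi
  rw [hνdef] at hj
  have hμν : μ < ν := hμdef ▸ hνdef ▸ hij
  have hν1 : ν ≤ n - 1 := by omega
  have hvan : ∀ c : Fin n → ℝ,
      (∀ k : Fin n, (k : ℕ) ≠ μ → (k : ℕ) ≠ ν → L c (aa n hn k) = 0) →
      ∀ w ∈ Set.range (aa n hn) \ {aa n hn i, aa n hn j}, L c w = 0 := by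
    rintro c hc w ⟨⟨k, rfl⟩, hw⟩
    simp only [Set.mem_insert_iff, Set.mem_singleton_iff, not_or] at hw
    have hki : (k : ℕ) ≠ (i : ℕ) := fun h => hw.1 (by rw [show k = i from Fin.ext h])
    have hkj : (k : ℕ) ≠ (j : ℕ) := fun h => hw.2 (by rw [show k = j from Fin.ext h])
    rw [hμdef] at hki
    rw [hνdef] at hkj
    exact hc k hki hkj
  have hcases : ν + 3 ≤ n ∨ ν = n - 2 ∨ ν = n - 1 := by omega
  rcases hcases with hcase | hcase | hcase
  · -- Case 1 : ν ≤ n - 3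
    refine case_core hn _ (fun t => if (t : ℕ) ≤ μ then (1:ℝ) else 0)
      (fun t => if μ < (t : ℕ) ∧ (t : ℕ) ≤ ν then (1:ℝ) else 0)
      (hvan _ ?_) (hvan _ ?_) (hcard_case1 hn μ ν hμν hcase)
    · intro k h1 h2
      by_cases hk : (k : ℕ) + 1 < n
      · rw [L_aa _ hn k hk]
        show (if (k : ℕ) ≤ μ then (1:ℝ) else 0) - (if (k : ℕ) + 1 ≤ μ then (1:ℝ) else 0) = 0
        split_ifs <;> first | (exfalso; omega) | norm_num
      · rw [L_aa_last _ hn k hk]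
        show (if n - 2 ≤ μ then (1:ℝ) else 0) + (if n - 1 ≤ μ then (1:ℝ) else 0) = 0
        rw [if_neg (by omega), if_neg (by omega)]
        norm_num
    · intro k h1 h2
      by_cases hk : (k : ℕ) + 1 < n
      · rw [L_aa _ hn k hk]
        show (if μ < (k : ℕ) ∧ (k : ℕ) ≤ ν then (1:ℝ) else 0)
          - (if μ < (k : ℕ) + 1 ∧ (k : ℕ) + 1 ≤ ν then (1:ℝ) else 0) = 0
        split_ifs <;> first | (exfalso; omega) | norm_num
      · rw [L_aa_last _ hn k hk]
        show (if μ < n - 2 ∧ n - 2 ≤ ν then (1:ℝ) else 0)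
          + (if μ < n - 1 ∧ n - 1 ≤ ν then (1:ℝ) else 0) = 0
        rw [if_neg (by omega), if_neg (by omega)]
        norm_num
  · -- Case 2 : ν = n - 2
    refine case_core hn _ (fun t => if (t : ℕ) ≤ μ then (1:ℝ) else 0)
      (fun t => if (t : ℕ) ≤ μ then (0:ℝ) else if (t : ℕ) ≤ n - 2 then 1 else -1)
      (hvan _ ?_) (hvan _ ?_) (hcard_case2 hn μ (by omega))
    · intro k h1 h2
      by_cases hk : (k : ℕ) + 1 < n
      · rw [L_aa _ hn k hk]
        show (if (k : ℕ) ≤ μ then (1:ℝ) else 0) - (if (k : ℕ) + 1 ≤ μ then (1:ℝ) else 0) = 0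
        split_ifs <;> first | (exfalso; omega) | norm_num
      · rw [L_aa_last _ hn k hk]
        show (if n - 2 ≤ μ then (1:ℝ) else 0) + (if n - 1 ≤ μ then (1:ℝ) else 0) = 0
        rw [if_neg (by omega), if_neg (by omega)]
        norm_num
    · intro k h1 h2
      by_cases hk : (k : ℕ) + 1 < n
      · rw [L_aa _ hn k hk]
        show (if (k : ℕ) ≤ μ then (0:ℝ) else if (k : ℕ) ≤ n - 2 then 1 else -1)
          - (if (k : ℕ) + 1 ≤ μ then (0:ℝ) else if (k : ℕ) + 1 ≤ n - 2 then 1 else -1) = 0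
        have hk2 : (k : ℕ) ≤ n - 2 := by omega
        rw [if_pos hk2]
        by_cases hkμ : (k : ℕ) ≤ μ
        · rw [if_pos hkμ, if_pos (by omega : (k : ℕ) + 1 ≤ μ)]
          norm_num
        · rw [if_neg hkμ, if_neg (by omega : ¬((k : ℕ) + 1 ≤ μ)),
            if_pos (by omega : (k : ℕ) + 1 ≤ n - 2)]
          norm_num
      · rw [L_aa_last _ hn k hk]
        show (if n - 2 ≤ μ then (0:ℝ) else if n - 2 ≤ n - 2 then 1 else -1)
          + (if n - 1 ≤ μ then (0:ℝ) else if n - 1 ≤ n - 2 then 1 else -1) = 0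
        rw [if_neg (show ¬(n - 2 ≤ μ) by omega), if_pos (le_refl (n - 2)),
          if_neg (show ¬(n - 1 ≤ μ) by omega), if_neg (show ¬(n - 1 ≤ n - 2) by omega)]
        norm_num
  · -- Case 3 : ν = n - 1
    refine case_core hn _ (fun t => if (t : ℕ) ≤ μ then (1:ℝ) else 0)
      (fun t => if μ < (t : ℕ) then (1:ℝ) else 0)
      (hvan _ ?_) (hvan _ ?_) (hcard_case3 hn μ (by omega))
    · intro k h1 h2
      have hklt := k.isLt
      by_cases hk : (k : ℕ) + 1 < n
      · rw [L_aa _ hn k hk]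
        show (if (k : ℕ) ≤ μ then (1:ℝ) else 0) - (if (k : ℕ) + 1 ≤ μ then (1:ℝ) else 0) = 0
        split_ifs <;> first | (exfalso; omega) | norm_num
      · exfalso; omega
    · intro k h1 h2
      have hklt := k.isLt
      by_cases hk : (k : ℕ) + 1 < n
      · rw [L_aa _ hn k hk]
        show (if μ < (k : ℕ) then (1:ℝ) else 0) - (if μ < (k : ℕ) + 1 then (1:ℝ) else 0) = 0
        split_ifs <;> first | (exfalso; omega) | norm_num
      · exfalso; omega

open Classical in
lemma lower_bound (hn : 5 ≤ n) (i j : Fin n) (hij : i ≠ j) :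
    4 * n - 6 ≤ ((univ : Finset (Fin n × Fin n × Bool)).filter fun x =>
      x.1 < x.2.1 ∧ rt n x ∉ Submodule.span ℝ
        (Set.range (aa n hn) \ {aa n hn i, aa n hn j})).card := by
  have hij' : (i : ℕ) ≠ (j : ℕ) := fun h => hij (Fin.ext h)
  rcases Nat.lt_or_ge (i : ℕ) (j : ℕ) with h | h
  · exact lower_bound' hn i j h
  · have h' : (j : ℕ) < (i : ℕ) := by omega
    have := lower_bound' hn j i h'
    rwa [Set.pair_comm (aa n hn j) (aa n hn i)] at this

end
end Stmt11

namespace Stmt11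
noncomputable section
open Finset
variable {n : ℕ}

lemma aa_pos (hn : 5 ≤ n) (k : Fin n) (h : (k : ℕ) + 1 < n) :
    aa n hn k = ee n k - ee n ⟨(k : ℕ) + 1, h⟩ := dif_pos h

lemma aa_neg (hn : 5 ≤ n) (k : Fin n) (h : ¬((k : ℕ) + 1 < n)) :
    aa n hn k = ee n ⟨n - 2, (by omega : n - 2 < n + 0)⟩ + ee n ⟨n - 1, (by omega : n - 1 < n + 0)⟩ := dif_neg h

lemma ee_apply' (a b : Fin n) : ee n a b = if (b : ℕ) = (a : ℕ) then (1:ℝ) else 0 := by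
  rw [ee_apply]
  congr 1
  simp [Fin.ext_iff]

lemma aa_coord (hn : 5 ≤ n) (k : Fin n) (c : Fin n) (h2 : 2 ≤ (k : ℕ)) (hc : (c : ℕ) ≤ 1) :
    aa n hn k c = 0 := by
  by_cases h : (k : ℕ) + 1 < n
  · rw [aa_pos hn k h]
    have hcc := c.isLt
    simp only [Pi.sub_apply, ee_apply']
    rw [if_neg (by omega), if_neg (by first | omega | (simp; omega))]
    norm_num
  · rw [aa_neg hn k h]
    simp only [Pi.add_apply, ee_apply']
    rw [if_neg (by first | omega | (simp; omega)), if_neg (by first | omega | (simp; omega))]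
    norm_num

lemma aa_mem_diff (hn : 5 ≤ n) (k : Fin n) (h2 : 2 ≤ (k : ℕ)) :
    aa n hn k ∈ Set.range (aa n hn) \
      {aa n hn ⟨0, by omega⟩, aa n hn ⟨1, by omega⟩} := by
  refine ⟨⟨k, rfl⟩, ?_⟩
  simp only [Set.mem_insert_iff, Set.mem_singleton_iff, not_or]
  constructor
  · intro h
    have := congrFun h (⟨0, by omega⟩ : Fin n)
    rw [aa_coord hn k _ h2 (by simp)] at this
    rw [aa_pos hn ⟨0, by omega⟩ (by first | omega | (simp; omega))] at this
    simp only [Pi.sub_apply, ee_apply'] at this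
    rw [if_pos (by simp), if_neg (by simp)] at this
    norm_num at this
  · intro h
    have := congrFun h (⟨1, by omega⟩ : Fin n)
    rw [aa_coord hn k _ h2 (by simp)] at this
    rw [aa_pos hn ⟨1, by omega⟩ (by first | omega | (simp; omega))] at this
    simp only [Pi.sub_apply, ee_apply'] at this
    rw [if_pos (by simp), if_neg (by first | omega | (simp; omega))] at this
    norm_num at this

lemma ee_mem_span (hn : 5 ≤ n) (t : Fin n) (ht : 2 ≤ (t : ℕ)) :
    ee n t ∈ Submodule.span ℝ (Set.range (aa n hn) \
      {aa n hn ⟨0, by omega⟩, aa n hn ⟨1, by omega⟩}) := by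
  set S := Set.range (aa n hn) \
      {aa n hn ⟨0, by omega⟩, aa n hn ⟨1, by omega⟩} with hS
  have hmem : ∀ k : Fin n, 2 ≤ (k : ℕ) → aa n hn k ∈ Submodule.span ℝ S :=
    fun k hk => Submodule.subset_span (aa_mem_diff hn k hk)
  have hn2 : n - 2 < n := by omega
  have hn1 : n - 1 < n := by omega
  have hsum : aa n hn ⟨n - 2, hn2⟩ + aa n hn ⟨n - 1, hn1⟩
      = (2:ℝ) • ee n ⟨n - 2, hn2⟩ := by
    rw [aa_pos hn ⟨n - 2, hn2⟩ (by first | omega | (simp; omega)), aa_neg hn ⟨n - 1, hn1⟩ (by first | omega | (simp; omega))]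
    have e1 : (⟨(n - 2 : ℕ) + 1, by omega⟩ : Fin n) = ⟨n - 1, hn1⟩ := by
      apply Fin.ext; first | omega | (simp; omega)
    rw [e1]
    ext c
    simp only [Pi.add_apply, Pi.sub_apply, Pi.smul_apply, smul_eq_mul]
    ring
  have hdiff : aa n hn ⟨n - 1, hn1⟩ - aa n hn ⟨n - 2, hn2⟩
      = (2:ℝ) • ee n ⟨n - 1, hn1⟩ := by
    rw [aa_pos hn ⟨n - 2, hn2⟩ (by first | omega | (simp; omega)), aa_neg hn ⟨n - 1, hn1⟩ (by first | omega | (simp; omega))]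
    have e1 : (⟨(n - 2 : ℕ) + 1, by omega⟩ : Fin n) = ⟨n - 1, hn1⟩ := by
      apply Fin.ext; first | omega | (simp; omega)
    rw [e1]
    ext c
    simp only [Pi.add_apply, Pi.sub_apply, Pi.smul_apply, smul_eq_mul]
    ring
  have hlast2 : ee n ⟨n - 2, hn2⟩ ∈ Submodule.span ℝ S := by
    have : ee n ⟨n - 2, hn2⟩ = (2⁻¹ : ℝ) • (aa n hn ⟨n - 2, hn2⟩ + aa n hn ⟨n - 1, hn1⟩) := by
      rw [hsum, smul_smul]
      norm_num
    rw [this]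
    exact Submodule.smul_mem _ _ (Submodule.add_mem _
      (hmem _ (by first | omega | (simp; omega))) (hmem _ (by first | omega | (simp; omega))))
  have hlast1 : ee n ⟨n - 1, hn1⟩ ∈ Submodule.span ℝ S := by
    have : ee n ⟨n - 1, hn1⟩ = (2⁻¹ : ℝ) • (aa n hn ⟨n - 1, hn1⟩ - aa n hn ⟨n - 2, hn2⟩) := by
      rw [hdiff, smul_smul]
      norm_num
    rw [this]
    exact Submodule.smul_mem _ _ (Submodule.sub_mem _
      (hmem _ (by first | omega | (simp; omega))) (hmem _ (by first | omega | (simp; omega))))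
  have main : ∀ d : ℕ, ∀ t : Fin n, 2 ≤ (t : ℕ) → n - 1 - (t : ℕ) ≤ d →
      ee n t ∈ Submodule.span ℝ S := by
    intro d
    induction d with
    | zero =>
      intro t ht hd
      have htl := t.isLt
      have : t = ⟨n - 1, hn1⟩ := Fin.ext (by first | omega | (simp; omega))
      rw [this]; exact hlast1
    | succ d ih =>
      intro t ht hd
      have htl := t.isLt
      by_cases hd' : n - 1 - (t : ℕ) ≤ d
      · exact ih t ht hd'
      by_cases ht2 : (t : ℕ) = n - 2
      · have : t = ⟨n - 2, hn2⟩ := Fin.ext (by first | omega | (simp; omega))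
        rw [this]; exact hlast2
      by_cases ht1 : (t : ℕ) = n - 1
      · have : t = ⟨n - 1, hn1⟩ := Fin.ext (by first | omega | (simp; omega))
        rw [this]; exact hlast1
      have hlt : (t : ℕ) + 1 < n := by omega
      have : ee n t = aa n hn t + ee n ⟨(t : ℕ) + 1, hlt⟩ := by
        rw [aa_pos hn t hlt]
        ext c
        simp only [Pi.add_apply, Pi.sub_apply]
        ring
      rw [this]
      refine Submodule.add_mem _ (hmem t ht) (ih ⟨(t : ℕ) + 1, hlt⟩ (by first | omega | (simp; omega))
        (by first | omega | (simp; omega)))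
  exact main (n - 1 - (t : ℕ)) t ht le_rfl

open Classical in
lemma upper_bound (hn : 5 ≤ n) :
    ((univ : Finset (Fin n × Fin n × Bool)).filter fun x =>
      x.1 < x.2.1 ∧ rt n x ∉ Submodule.span ℝ (Set.range (aa n hn) \
        {aa n hn ⟨0, by omega⟩, aa n hn ⟨1, by omega⟩})).card ≤ 4 * n - 6 := by
  set S := Set.range (aa n hn) \
      {aa n hn ⟨0, by omega⟩, aa n hn ⟨1, by omega⟩} with hS
  -- step 1: subset of (a ≤ 1) triples
  have hsub : ((univ : Finset (Fin n × Fin n × Bool)).filter fun x =>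
      x.1 < x.2.1 ∧ rt n x ∉ Submodule.span ℝ S)
      ⊆ (univ.filter fun x : Fin n × Fin n × Bool => x.1 < x.2.1 ∧ (x.1 : ℕ) ≤ 1) := by
    intro x hx
    simp only [Finset.mem_filter, Finset.mem_univ, true_and] at hx ⊢
    obtain ⟨hlt, hnm⟩ := hx
    refine ⟨hlt, ?_⟩
    by_contra hcon
    apply hnm
    have ha : 2 ≤ (x.1 : ℕ) := by omega
    have hb : 2 ≤ (x.2.1 : ℕ) := by
      have : (x.1 : ℕ) < (x.2.1 : ℕ) := hlt
      omega
    have hma := ee_mem_span hn x.1 ha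
    have hmb := ee_mem_span hn x.2.1 hb
    rcases x with ⟨a, b, s⟩
    cases s
    · show ee n a - ee n b ∈ _
      exact Submodule.sub_mem _ hma hmb
    · show ee n a + ee n b ∈ _
      exact Submodule.add_mem _ hma hmb
  refine le_trans (Finset.card_le_card hsub) ?_
  rw [bool_split (fun x : Fin n × Fin n × Bool => x.1 < x.2.1 ∧ (x.1 : ℕ) ≤ 1)]
  show (univ.filter fun p : Fin n × Fin n => p.1 < p.2 ∧ (p.1 : ℕ) ≤ 1).card
      + (univ.filter fun p : Fin n × Fin n => p.1 < p.2 ∧ (p.1 : ℕ) ≤ 1).card ≤ 4 * n - 6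
  have hpair : ∀ cardp : ℕ, cardp = (univ.filter fun p : Fin n × Fin n =>
      p.1 < p.2 ∧ (p.1 : ℕ) ≤ 1).card → cardp ≤ 2 * n - 3 := by
    intro cardp hcp
    have hsub2 : (univ.filter fun p : Fin n × Fin n => p.1 < p.2 ∧ (p.1 : ℕ) ≤ 1)
        ⊆ ({(⟨0, by omega⟩ : Fin n)} ×ˢ (univ.filter fun t : Fin n => 1 ≤ (t : ℕ) ∧ (t : ℕ) < n))
          ∪ ({(⟨1, by omega⟩ : Fin n)} ×ˢ (univ.filter fun t : Fin n => 2 ≤ (t : ℕ) ∧ (t : ℕ) < n)) := by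
      intro p hp
      simp only [Finset.mem_filter, Finset.mem_univ, true_and, Finset.mem_union,
        Finset.mem_product, Finset.mem_singleton] at hp ⊢
      obtain ⟨hlt, hle⟩ := hp
      have hlt' : (p.1 : ℕ) < (p.2 : ℕ) := hlt
      have h2 := p.2.isLt
      rcases Nat.lt_or_ge (p.1 : ℕ) 1 with h0 | h0
      · left
        exact ⟨Fin.ext (by first | omega | (simp; omega)), by omega, h2⟩
      · right
        exact ⟨Fin.ext (by first | omega | (simp; omega)), by omega, h2⟩
    have c1 : (univ.filter fun t : Fin n => 1 ≤ (t : ℕ) ∧ (t : ℕ) < n).card = n - 1 :=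
      card_coe_Ico (by omega) 1 n le_rfl
    have c2 : (univ.filter fun t : Fin n => 2 ≤ (t : ℕ) ∧ (t : ℕ) < n).card = n - 2 :=
      card_coe_Ico (by omega) 2 n le_rfl
    have := Finset.card_le_card hsub2
    have hcu := Finset.card_union_le
      ({(⟨0, by omega⟩ : Fin n)} ×ˢ (univ.filter fun t : Fin n => 1 ≤ (t : ℕ) ∧ (t : ℕ) < n))
      (({(⟨1, by omega⟩ : Fin n)} ×ˢ (univ.filter fun t : Fin n => 2 ≤ (t : ℕ) ∧ (t : ℕ) < n)))
    rw [Finset.card_product, Finset.card_product, Finset.card_singleton,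
      Finset.card_singleton, one_mul, one_mul, c1, c2] at hcu
    omega
  have h1 := hpair _ rfl
  have h2 := hpair _ rfl
  omega

end
end Stmt11

/-- In the root system of type `D_n` (`n ≥ 5`), the minimum over unordered pairs of distinct
simple roots `{α_i, α_j}` of the resonant codimension of `Π \ {α_i, α_j}` equals `4n - 6`. -/
theorem stmt11 (n : ℕ) (hn : 5 ≤ n) :
    let e : Fin n → (Fin n → ℝ) := fun i => Pi.single i 1
    let Sp : Set (Fin n → ℝ) :=
      {v | ∃ i j : Fin n, i < j ∧ (v = e i - e j ∨ v = e i + e j)}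
    let α : Fin n → (Fin n → ℝ) := fun k =>
      if h : (k : ℕ) + 1 < n then e k - e ⟨(k : ℕ) + 1, h⟩
      else e ⟨n - 2, by omega⟩ + e ⟨n - 1, by omega⟩
    let rc : Set (Fin n → ℝ) → ℕ := fun Pi' =>
      Set.ncard {v | v ∈ Sp ∧ v ∉ Submodule.span ℝ Pi'}
    (⨅ p : {p : Fin n × Fin n // p.1 ≠ p.2},
      rc (Set.range α \ {α p.val.1, α p.val.2})) = 4 * n - 6 := by
  classical
  intro e Sp α rc
  set i0 : Fin n := ⟨0, by omega⟩ with hi0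
  set i1 : Fin n := ⟨1, by omega⟩ with hi1
  have hne : ((i0, i1) : Fin n × Fin n).1 ≠ ((i0, i1) : Fin n × Fin n).2 := by
    intro h
    have := congrArg Fin.val h
    simp [hi0, hi1] at this
  have key : ∀ (i j : Fin n), rc (Set.range α \ {α i, α j}) =
      ((Finset.univ : Finset (Fin n × Fin n × Bool)).filter fun x =>
        x.1 < x.2.1 ∧ Stmt11.rt n x ∉ Submodule.span ℝ
          (Set.range (Stmt11.aa n hn) \ {Stmt11.aa n hn i, Stmt11.aa n hn j})).card := by
    intro i j
    show Set.ncard {v | v ∈ Stmt11.SpS n ∧ v ∉ Submodule.span ℝ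
      (Set.range (Stmt11.aa n hn) \ {Stmt11.aa n hn i, Stmt11.aa n hn j})} = _
    exact Stmt11.transfer _
  apply le_antisymm
  · have h2 : rc (Set.range α \ {α i0, α i1}) ≤ 4 * n - 6 := by
      rw [key i0 i1]
      exact Stmt11.upper_bound hn
    have h1 : (⨅ p : {p : Fin n × Fin n // p.1 ≠ p.2},
        rc (Set.range α \ {α p.val.1, α p.val.2}))
        ≤ rc (Set.range α \ {α i0, α i1}) :=
      ciInf_le' (fun p : {p : Fin n × Fin n // p.1 ≠ p.2} =>
        rc (Set.range α \ {α p.val.1, α p.val.2})) ⟨(i0, i1), hne⟩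
    exact le_trans h1 h2
  · haveI : Nonempty {p : Fin n × Fin n // p.1 ≠ p.2} := ⟨⟨(i0, i1), hne⟩⟩
    refine le_ciInf ?_
    intro p
    show 4 * n - 6 ≤ rc (Set.range α \ {α p.val.1, α p.val.2})
    rw [key p.val.1 p.val.2]
    exact Stmt11.lower_bound hn p.val.1 p.val.2 p.prop
end

section
/- Let Σ be an irreducible (possibly non-reduced) crystallographic root system of rank at least 2 in a finite-dimensional real inner product space V, with base Π. Fix α ∈ Π, and let β ∈ Σ be a negative root whose α-coefficient is nonzero. Then there exists a root γ ∈ Σ such that: (i) γ is not of the form −cβ for any real c > 0; (ii) γ is either a positive root or has zero α-coefficient (equivalently, γ lies in span_ℝ(Π ∖ {α})); (iii) β + γ ∈ Σ; and (iv) β + γ is a negative root whose α-coefficient is nonzero. -/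
open scoped RealInnerProductSpace

section aux
variable {V : Type*} [NormedAddCommGroup V] [InnerProductSpace ℝ V]

lemma aux_self_pos (x : V) (hx0 : x ≠ 0) : 0 < ⟪x, x⟫ := by
  rw [real_inner_self_eq_norm_mul_norm]
  exact mul_pos (norm_pos_iff.mpr hx0) (norm_pos_iff.mpr hx0)

lemma aux_cs (x y : V) (hy : 0 < ⟪y, y⟫) (hpar : ∀ c : ℝ, x ≠ c • y) :
    ⟪x, y⟫ * ⟪x, y⟫ < ⟪x, x⟫ * ⟪y, y⟫ := by
  set z := ⟪y, y⟫ • x - ⟪x, y⟫ • y with hzdef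
  have hz : z ≠ 0 := by
    intro h
    apply hpar (⟪x, y⟫ / ⟪y, y⟫)
    have h1 : ⟪y, y⟫ • x = ⟪x, y⟫ • y := sub_eq_zero.mp h
    rw [div_eq_mul_inv, mul_comm, mul_smul, ← h1, inv_smul_smul₀ hy.ne']
  have hzz : 0 < ⟪z, z⟫ := aux_self_pos z hz
  have hexp : ⟪z, z⟫ = ⟪y, y⟫ * (⟪x, x⟫ * ⟪y, y⟫ - ⟪x, y⟫ * ⟪x, y⟫) := by
    simp only [hzdef, inner_sub_left, inner_sub_right, real_inner_smul_left,
      real_inner_smul_right, real_inner_comm x y]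
    ring
  nlinarith [hzz, hexp, hy]

lemma aux_neg_mem (Sig : Set V) (h0 : (0 : V) ∉ Sig)
    (hrefl : ∀ α ∈ Sig, ∀ β ∈ Sig, β - (2 * ⟪β, α⟫ / ⟪α, α⟫) • α ∈ Sig) :
    ∀ x ∈ Sig, -x ∈ Sig := by
  intro x hx
  have hx0 : x ≠ 0 := fun h => h0 (h ▸ hx)
  have hxx : ⟪x, x⟫ ≠ 0 := (aux_self_pos x hx0).ne'
  have h := hrefl x hx x hx
  have h2 : 2 * ⟪x, x⟫ / ⟪x, x⟫ = 2 := by field_simp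
  rw [h2] at h
  have : x - (2 : ℝ) • x = -x := by module
  rwa [this] at h

lemma aux_sum_mem (Sig : Set V) (h0 : (0 : V) ∉ Sig)
    (hrefl : ∀ α ∈ Sig, ∀ β ∈ Sig, β - (2 * ⟪β, α⟫ / ⟪α, α⟫) • α ∈ Sig)
    (hcrys : ∀ α ∈ Sig, ∀ β ∈ Sig, ∃ k : ℤ, (k : ℝ) = 2 * ⟪β, α⟫ / ⟪α, α⟫) :
    ∀ x ∈ Sig, ∀ y ∈ Sig, ⟪x, y⟫ < 0 → (∀ c : ℝ, x ≠ c • y) → x + y ∈ Sig := by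
  intro x hx y hy hneg hpar
  have hx0 : x ≠ 0 := fun h => h0 (h ▸ hx)
  have hy0 : y ≠ 0 := fun h => h0 (h ▸ hy)
  have hxx : 0 < ⟪x, x⟫ := aux_self_pos x hx0
  have hyy : 0 < ⟪y, y⟫ := aux_self_pos y hy0
  obtain ⟨k, hk⟩ := hcrys y hy x hx
  obtain ⟨k', hk'⟩ := hcrys x hx y hy
  have hyx : ⟪y, x⟫ < 0 := by rwa [real_inner_comm]
  have hkneg : (k : ℝ) < 0 := by rw [hk]; exact div_neg_of_neg_of_pos (by linarith) hyy
  have hk'neg : (k' : ℝ) < 0 := by rw [hk']; exact div_neg_of_neg_of_pos (by linarith) hxx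
  have hCS : ⟪x, y⟫ * ⟪x, y⟫ < ⟪x, x⟫ * ⟪y, y⟫ := aux_cs x y hyy hpar
  rw [real_inner_comm x y] at hk'
  have hprod : (k : ℝ) * (k' : ℝ) < 4 := by
    rw [hk, hk', div_mul_div_comm, div_lt_iff₀ (by positivity)]
    nlinarith
  have hkZ : k < 0 := by exact_mod_cast hkneg
  have hk'Z : k' < 0 := by exact_mod_cast hk'neg
  have hprodZ : k * k' < 4 := by exact_mod_cast hprod
  have hone : k = -1 ∨ k' = -1 := by
    by_contra h
    push_neg at h
    obtain ⟨h1, h2⟩ := h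
    have : k ≤ -2 := by omega
    have : k' ≤ -2 := by omega
    nlinarith
  rcases hone with h | h
  · have hr := hrefl y hy x hx
    rw [← hk, h] at hr
    have : x - ((-1 : ℤ) : ℝ) • y = x + y := by push_cast; module
    rwa [this] at hr
  · have hr := hrefl x hx y hy
    rw [real_inner_comm x y] at hr
    rw [← hk', h] at hr
    have : y - ((-1 : ℤ) : ℝ) • x = x + y := by push_cast; module
    rwa [this] at hr

end aux

/-- Let `Sig` be an irreducible (possibly non-reduced) crystallographic root system of rank
at least `2` in a finite-dimensional real inner product space `V`, with base given by the
range of a basis `b : Basis ι ℝ V` (so every root has all coefficients `≥ 0` or all `≤ 0`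
in this basis). Fix a simple root index `i₀`, and let `β` be a negative root whose
`i₀`-coefficient is nonzero. Then there is a root `γ` such that: `γ` is not a positive
multiple of `-β`; `γ` is either a positive root or has zero `i₀`-coefficient; `β + γ` is a
root; and `β + γ` is a negative root with nonzero `i₀`-coefficient. -/
theorem stmt17 {V : Type*} [NormedAddCommGroup V] [InnerProductSpace ℝ V]
    [FiniteDimensional ℝ V]
    (Sig : Set V) (hfin : Sig.Finite) (h0 : (0 : V) ∉ Sig)
    (hspan : Submodule.span ℝ Sig = ⊤)
    (hrefl : ∀ α ∈ Sig, ∀ β ∈ Sig, β - (2 * ⟪β, α⟫ / ⟪α, α⟫) • α ∈ Sig)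
    (hcrys : ∀ α ∈ Sig, ∀ β ∈ Sig, ∃ k : ℤ, (k : ℝ) = 2 * ⟪β, α⟫ / ⟪α, α⟫)
    (hirr : ∀ S₁ S₂ : Set V, S₁.Nonempty → S₂.Nonempty → Sig = S₁ ∪ S₂ →
      (∀ x ∈ S₁, ∀ y ∈ S₂, ⟪x, y⟫ = 0) → False)
    (hrank : 2 ≤ Module.finrank ℝ V)
    {ι : Type*} [Fintype ι] (b : Module.Basis ι ℝ V)
    (hbSig : Set.range b ⊆ Sig)
    (hbase : ∀ β ∈ Sig, (∀ i, 0 ≤ b.repr β i) ∨ (∀ i, b.repr β i ≤ 0))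
    (i₀ : ι) (β : V) (hβ : β ∈ Sig)
    (hβneg : ∀ i, b.repr β i ≤ 0) (hβi₀ : b.repr β i₀ ≠ 0) :
    ∃ γ ∈ Sig, (∀ c : ℝ, 0 < c → γ ≠ -c • β) ∧
      ((∀ i, 0 ≤ b.repr γ i) ∨ b.repr γ i₀ = 0) ∧
      β + γ ∈ Sig ∧ (∀ i, b.repr (β + γ) i ≤ 0) ∧ b.repr (β + γ) i₀ ≠ 0 := by
  classical
  have hnegmem := aux_neg_mem Sig h0 hrefl
  have hsum := aux_sum_mem Sig h0 hrefl hcrys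
  have hc0 : b.repr β i₀ < 0 := lt_of_le_of_ne (hβneg i₀) hβi₀
  have hβ0 : β ≠ 0 := fun h => h0 (h ▸ hβ)
  have hββ : 0 < ⟪β, β⟫ := aux_self_pos β hβ0
  have hnegcase : ∀ x ∈ Sig, b.repr x i₀ < 0 → ∀ j, b.repr x j ≤ 0 := by
    intro x hx hi j
    rcases hbase x hx with h | h
    · exact absurd (h i₀) (not_le.mpr hi)
    · exact h j
  by_cases hdeg : ∃ j, j ≠ i₀ ∧ ⟪β, b j⟫ ≠ 0
  · -- non-degenerate case: use a simple root b j with j ≠ i₀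
    obtain ⟨j, hj, hjne⟩ := hdeg
    have hbjS : b j ∈ Sig := hbSig ⟨j, rfl⟩
    have hbj0 : b.repr (b j) i₀ = 0 := by
      rw [Module.Basis.repr_self]
      exact Finsupp.single_eq_of_ne' hj
    have hβnotpar : ∀ c : ℝ, β ≠ c • b j := by
      intro c h
      apply hβi₀
      rw [h, map_smul, Finsupp.smul_apply, hbj0, smul_zero]
    rcases lt_or_gt_of_ne hjne with hlt | hgt
    · -- γ = b j
      have hmem : β + b j ∈ Sig := hsum β hβ (b j) hbjS hlt hβnotpar
      have hrepr : b.repr (β + b j) i₀ = b.repr β i₀ := by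
        rw [map_add, Finsupp.add_apply, hbj0, add_zero]
      refine ⟨b j, hbjS, ?_, Or.inl ?_, hmem, ?_, ?_⟩
      · intro c hc h
        have := hbj0
        rw [h, map_smul, Finsupp.smul_apply] at this
        rcases mul_eq_zero.mp this with h' | h'
        · exact absurd h' (by simp; linarith)
        · exact hβi₀ h'
      · intro i
        rw [Module.Basis.repr_self]
        by_cases hji : j = i
        · simp [hji]
        · rw [Finsupp.single_eq_of_ne' hji]
      · exact hnegcase _ hmem (hrepr ▸ hc0)
      · rw [hrepr]; exact hβi₀
    · -- γ = -(b j)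
      have hnbjS : -(b j) ∈ Sig := hnegmem (b j) hbjS
      have hinner : ⟪β, -(b j)⟫ < 0 := by rw [inner_neg_right]; linarith
      have hβnotpar' : ∀ c : ℝ, β ≠ c • (-(b j)) := by
        intro c h
        exact hβnotpar (-c) (by rw [h, smul_neg, neg_smul])
      have hmem : β + -(b j) ∈ Sig := hsum β hβ (-(b j)) hnbjS hinner hβnotpar'
      have hnbj0 : b.repr (-(b j)) i₀ = 0 := by rw [map_neg, Finsupp.neg_apply, hbj0, neg_zero]
      have hrepr : b.repr (β + -(b j)) i₀ = b.repr β i₀ := by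
        rw [map_add, Finsupp.add_apply, hnbj0, add_zero]
      refine ⟨-(b j), hnbjS, ?_, Or.inr hnbj0, hmem, ?_, ?_⟩
      · intro c hc h
        have := hnbj0
        rw [h, map_smul, Finsupp.smul_apply] at this
        rcases mul_eq_zero.mp this with h' | h'
        · exact absurd h' (by simp; linarith)
        · exact hβi₀ h'
      · exact hnegcase _ hmem (hrepr ▸ hc0)
      · rw [hrepr]; exact hβi₀
  · -- degenerate case: β ⟂ b j for all j ≠ i₀
    push_neg at hdeg
    have key : ∀ x : V, ⟪x, β⟫ = b.repr x i₀ * ⟪b i₀, β⟫ := by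
      intro x
      have hexp : ⟪x, β⟫ = ∑ i, b.repr x i * ⟪b i, β⟫ := by
        conv_lhs => rw [← b.sum_repr x]
        rw [sum_inner]
        simp [real_inner_smul_left]
      rw [hexp]
      apply Finset.sum_eq_single i₀
      · intro j _ hji
        rw [real_inner_comm, hdeg j hji, mul_zero]
      · intro h
        exact absurd (Finset.mem_univ i₀) h
    have hkeyβ : b.repr β i₀ * ⟪b i₀, β⟫ = ⟪β, β⟫ := (key β).symm
    have hb0β : ⟪b i₀, β⟫ < 0 := by nlinarith
    -- find a root neither parallel nor orthogonal to β
    have hex : ∃ x ∈ Sig, ⟪x, β⟫ ≠ 0 ∧ ∀ c : ℝ, x ≠ c • β := by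
      by_contra hcon
      push_neg at hcon
      have hcard : 1 < Fintype.card ι := by
        have := Module.finrank_eq_card_basis b
        omega
      obtain ⟨j, hj⟩ := Fintype.exists_ne_of_one_lt_card hcard i₀
      refine hirr {x | x ∈ Sig ∧ ∃ c : ℝ, x = c • β} {x | x ∈ Sig ∧ ⟪x, β⟫ = 0}
        ⟨β, hβ, 1, (one_smul ℝ β).symm⟩
        ⟨b j, hbSig ⟨j, rfl⟩, by rw [real_inner_comm]; exact hdeg j hj⟩ ?_ ?_
      · ext x
        constructor
        · intro hx
          by_cases h' : ⟪x, β⟫ = 0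
          · exact Or.inr ⟨hx, h'⟩
          · exact Or.inl ⟨hx, hcon x hx h'⟩
        · rintro (⟨hx, -⟩ | ⟨hx, -⟩) <;> exact hx
      · rintro x ⟨-, c, rfl⟩ y ⟨-, hy⟩
        rw [real_inner_smul_left, real_inner_comm, hy, mul_zero]
    obtain ⟨x₁, hx₁S, hx₁o, hx₁p⟩ := hex
    have hex2 : ∃ x ∈ Sig, ⟪x, β⟫ < 0 ∧ ∀ c : ℝ, x ≠ c • β := by
      rcases lt_or_gt_of_ne hx₁o with h | h
      · exact ⟨x₁, hx₁S, h, hx₁p⟩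
      · refine ⟨-x₁, hnegmem x₁ hx₁S, by rw [inner_neg_left]; linarith, ?_⟩
        intro c h'
        exact hx₁p (-c) (by rw [neg_smul, ← h', neg_neg])
    set P : Set V := {x | x ∈ Sig ∧ ⟪x, β⟫ < 0 ∧ ∀ c : ℝ, x ≠ c • β} with hPdef
    have hPfin : P.Finite := hfin.subset (fun x hx => hx.1)
    have hPne : P.Nonempty := by
      obtain ⟨x, h1, h2, h3⟩ := hex2
      exact ⟨x, h1, h2, h3⟩
    obtain ⟨x, hxP, hxmax⟩ := Set.exists_max_image P (fun z => ⟪z, β⟫) hPfin hPne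
    obtain ⟨hxS, hxβ, hxpar⟩ := hxP
    obtain ⟨k, hk⟩ := hcrys β hβ x hxS
    have hkval : 2 * ⟪x, β⟫ = (k : ℝ) * ⟪β, β⟫ := by
      rw [hk]; field_simp
    have hxβsum : x + β ∈ Sig := hsum x hxS β hβ hxβ hxpar
    have hkZneg : k < 0 := by
      by_contra h
      push_neg at h
      have : (0 : ℝ) ≤ (k : ℝ) := by exact_mod_cast h
      nlinarith
    have hk12 : k = -1 ∨ k = -2 := by
      by_contra hcontra
      push_neg at hcontra
      have hk3 : k ≤ -3 := by omega
      have hk3' : (k : ℝ) ≤ -3 := by exact_mod_cast hk3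
      have hy1 : ⟪x + β, β⟫ < 0 := by
        rw [inner_add_left]
        nlinarith
      have hy2 : ∀ c : ℝ, x + β ≠ c • β := by
        intro c h
        apply hxpar (c - 1)
        rw [sub_smul, one_smul, ← h]
        abel
      have hyP : x + β ∈ P := ⟨hxβsum, hy1, hy2⟩
      have := hxmax _ hyP
      simp only [inner_add_left] at this
      linarith
    have hreprx : b.repr x i₀ * ⟪b i₀, β⟫ = ⟪x, β⟫ := (key x).symm
    have hbne : ⟪b i₀, β⟫ ≠ 0 := hb0β.ne
    rcases hk12 with hkk | hkk
    · -- k = -1, γ = x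
      have hk' : (k : ℝ) = -1 := by rw [hkk]; norm_num
      have h2x : 2 * ⟪x, β⟫ = -⟪β, β⟫ := by rw [hkval, hk']; ring
      have hrx : b.repr x i₀ = -(b.repr β i₀) / 2 := by
        have : (2 * b.repr x i₀ + b.repr β i₀) * ⟪b i₀, β⟫ = 0 := by
          rw [add_mul, mul_assoc, hreprx, hkeyβ]
          linarith
        rcases mul_eq_zero.mp this with h' | h'
        · linarith [h']
        · exact absurd h' hbne
      have hrxpos : 0 < b.repr x i₀ := by rw [hrx]; linarith
      have hmem : β + x ∈ Sig := by rw [add_comm]; exact hxβsum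
      have hrepr : b.repr (β + x) i₀ = b.repr β i₀ / 2 := by
        rw [map_add, Finsupp.add_apply, hrx]; ring
      refine ⟨x, hxS, ?_, Or.inl ?_, hmem, ?_, ?_⟩
      · intro c hc h
        exact hxpar (-c) h
      · intro i
        rcases hbase x hxS with h | h
        · exact h i
        · linarith [h i₀]
      · exact hnegcase _ hmem (by rw [hrepr]; linarith)
      · rw [hrepr]; intro h; apply hβi₀; linarith [h]
    · -- k = -2, γ = β + x
      have hk' : (k : ℝ) = -2 := by rw [hkk]; norm_num
      have h2x : ⟪x, β⟫ = -⟪β, β⟫ := by nlinarith [hkval, hk']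
      have hrx : b.repr x i₀ = -(b.repr β i₀) := by
        have : (b.repr x i₀ + b.repr β i₀) * ⟪b i₀, β⟫ = 0 := by
          rw [add_mul, hreprx, hkeyβ]
          linarith
        rcases mul_eq_zero.mp this with h' | h'
        · linarith
        · exact absurd h' hbne
      have hγS : β + x ∈ Sig := by rw [add_comm]; exact hxβsum
      have hγ0 : b.repr (β + x) i₀ = 0 := by
        rw [map_add, Finsupp.add_apply, hrx]; ring
      have hmem : β + (β + x) ∈ Sig := by
        have hr := hrefl β hβ x hxS
        rw [← hk, hk'] at hr
        have heq : x - (-2 : ℝ) • β = β + (β + x) := by module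
        rwa [heq] at hr
      have hrepr : b.repr (β + (β + x)) i₀ = b.repr β i₀ := by
        rw [map_add, Finsupp.add_apply, hγ0, add_zero]
      refine ⟨β + x, hγS, ?_, Or.inr hγ0, hmem, ?_, ?_⟩
      · intro c hc h
        apply hxpar (-c - 1)
        have : x = -c • β - β := by rw [← h]; abel
        rw [this, sub_smul, one_smul]
      · exact hnegcase _ hmem (hrepr ▸ hc0)
      · rw [hrepr]; exact hβi₀
end
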